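/- (Generalized Doob optional sampling) Let ρ be a DMU satisfying monotonicity, regularity, recursiveness, and conditional translation invariance, and let M = (M_t)_{t=0,...,T} be a ρ-martingale, i.e., M_t = ρ_t(M_{t+1}) for 0 ≤ t < T. Then for any stopping time τ with i ≤ τ ≤ T almost surely, one has ρ_i(M_τ) = M_i for all 0 ≤ i ≤ T. -/

import Mathlib

open MeasureTheory

/-- Generalized Doob optional sampling theorem: for a DMU `ρ` satisfying
(C1)–(C4) and a `ρ`-martingale `M`, for any stopping time `τ` with
`i ≤ τ ≤ T` one has `ρ_i (M_τ) = M_i`, for all `0 ≤ i ≤ T`. -/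
theorem dmu_doob_optional_sampling
    {Ω : Type*} {m : MeasurableSpace Ω}
    (F : MeasureTheory.Filtration ℕ m) (T : ℕ)
    (ρ : ℕ → (Ω → ℝ) → (Ω → ℝ))
    (hmeas : ∀ t (X : Ω → ℝ), Measurable[F t] (ρ t X))
    (hmono : ∀ t, t ≤ T → ∀ (X Y : Ω → ℝ), X ≤ Y → ρ t X ≤ ρ t Y)
    (hreg : ∀ t, t ≤ T → ∀ (X : Ω → ℝ) (A : Set Ω), MeasurableSet[F t] A →
      ρ t (A.indicator X) = A.indicator (ρ t X))
    (hrec : ∀ t, t < T → ∀ (X : Ω → ℝ), ρ t (ρ (t + 1) X) = ρ t X)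
    (hcti : ∀ t, t ≤ T → ∀ (X Y : Ω → ℝ), Measurable[F t] Y →
      ρ t (X + Y) = ρ t X + Y)
    (M : ℕ → Ω → ℝ)
    (hMadapted : ∀ t, Measurable[F t] (M t))
    (hMmart : ∀ t, t < T → M t = ρ t (M (t + 1))) :
    ∀ i, i ≤ T → ∀ τ : Ω → ℕ,
      (∀ j, MeasurableSet[F j] {ω | τ ω = j}) →
      (∀ ω, i ≤ τ ω ∧ τ ω ≤ T) →
      ρ i (fun ω => M (τ ω) ω) = M i := by
  -- ρ t 0 = 0
  have hzero : ∀ t, t ≤ T → ρ t 0 = 0 := by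
    intro t ht
    have h := hreg t ht 0 ∅ (@MeasurableSet.empty Ω (F t))
    simp at h
    exact h
  -- ρ t Y = Y for F t measurable Y
  have hfix : ∀ t, t ≤ T → ∀ (Y : Ω → ℝ), Measurable[F t] Y → ρ t Y = Y := by
    intro t ht Y hY
    have h := hcti t ht 0 Y hY
    simpa [hzero t ht] using h
  suffices H : ∀ n i, i + n = T → ∀ τ : Ω → ℕ,
      (∀ j, MeasurableSet[F j] {ω | τ ω = j}) →
      (∀ ω, i ≤ τ ω ∧ τ ω ≤ T) →
      ρ i (fun ω => M (τ ω) ω) = M i by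
    intro i hi τ h1 h2
    exact H (T - i) i (by omega) τ h1 h2
  intro n
  induction n with
  | zero =>
    intro i hi τ hτm hτb
    have hiT : i = T := by omega
    have hfun : (fun ω => M (τ ω) ω) = M i := by
      funext ω
      have : τ ω = i := by have := hτb ω; omega
      rw [this]
    rw [hfun]
    exact hfix i (by omega) (M i) (hMadapted i)
  | succ n ih =>
    intro i hi τ hτm hτb
    have hiT : i < T := by omega
    set A : Set Ω := {ω | τ ω = i} with hA
    have hAmeas : MeasurableSet[F i] A := hτm i
    set g : Ω → ℝ := fun ω => M (max (τ ω) (i + 1)) ω with hg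
    -- τ' := max τ (i+1) is a stopping time
    have hτ' : ∀ j, MeasurableSet[F j] {ω | max (τ ω) (i + 1) = j} := by
      intro j
      rcases lt_trichotomy j (i + 1) with h | h | h
      · have : {ω | max (τ ω) (i + 1) = j} = (∅ : Set Ω) := by
          ext ω; simp; omega
        rw [this]; exact @MeasurableSet.empty Ω (F j)
      · subst h
        have : {ω | max (τ ω) (i + 1) = i + 1} = ⋃ k : Fin (i + 2), {ω | τ ω = k} := by
          ext ω
          simp only [Set.mem_setOf_eq, Set.mem_iUnion]
          constructor
          · intro hmax
            refine ⟨⟨τ ω, by omega⟩, rfl⟩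
          · rintro ⟨k, hk⟩
            have := k.isLt
            omega
        rw [this]
        exact MeasurableSet.iUnion fun k =>
          F.mono (by omega : (k : ℕ) ≤ i + 1) _ (hτm k)
      · have : {ω | max (τ ω) (i + 1) = j} = {ω | τ ω = j} := by
          ext ω; simp; omega
        rw [this]; exact hτm j
    have hbd' : ∀ ω, i + 1 ≤ max (τ ω) (i + 1) ∧ max (τ ω) (i + 1) ≤ T := by
      intro ω
      exact ⟨le_max_right _ _, max_le (hτb ω).2 (by omega)⟩
    have hIH : ρ (i + 1) g = M (i + 1) :=
      ih (i + 1) (by omega) _ hτ' hbd'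
    have hρg : ρ i g = M i := by
      calc ρ i g = ρ i (ρ (i + 1) g) := (hrec i hiT g).symm
        _ = ρ i (M (i + 1)) := by rw [hIH]
        _ = M i := (hMmart i hiT).symm
    have hdecomp : (fun ω => M (τ ω) ω) = Aᶜ.indicator g + A.indicator (M i) := by
      funext ω
      by_cases hω : ω ∈ A
      · have hτi : τ ω = i := hω
        simp [Set.indicator, hω, hτi]
      · have hτi : τ ω ≠ i := hω
        have h1 : i + 1 ≤ τ ω := by have := (hτb ω).1; omega
        have hmax : max (τ ω) (i + 1) = τ ω := by omega
        simp [Set.indicator, hω, hg, hmax]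
    have hYmeas : Measurable[F i] (A.indicator (M i)) :=
      (hMadapted i).indicator hAmeas
    rw [hdecomp, hcti i (le_of_lt hiT) _ _ hYmeas,
      hreg i (le_of_lt hiT) g Aᶜ hAmeas.compl, hρg]
    funext ω
    by_cases hω : ω ∈ A <;> simp [Set.indicator, hω]
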